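/- Quantile asymptotics for the distance-to-query: let F^{−1}(u) := inf{t ≥ 0 : F(t) ≥ u} be the generalized inverse of F. Then, as u → 0⁺, F^{−1}(u) = (u/C(q))^α · (1 + o(1)); that is, F^{−1}(u) / (u/C(q))^α → 1 as u → 0⁺. -/

import Mathlib

open MeasureTheory ProbabilityTheory Real Filter Topology
open scoped RealInnerProductSpace ENNReal

noncomputable section

namespace AttnScaling

open Set Metric
open scoped Pointwise

/-- ambient Euclidean space `ℝ^d` -/
abbrev Euc (d : ℕ) := EuclideanSpace ℝ (Fin d)

/-- The surface measure on the unit sphere `S^{d-1} ⊆ ℝ^d`, viewed as a measure on the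
ambient space (the pushforward of `volume.toSphere` along the inclusion). -/
def surfaceMeasure (d : ℕ) : Measure (Euc d) :=
  Measure.map Subtype.val ((volume : Measure (Euc d)).toSphere)

/-- Surface area of the unit sphere `S^{m-1} ⊆ ℝ^m`. -/
def sphereArea (m : ℕ) : ℝ :=
  (((volume : Measure (Euc m)).toSphere) Set.univ).toReal

/-- The law `ρ dσ` of a single token on the sphere. -/
def tokenLaw (d : ℕ) (ρ : Euc d → ℝ) : Measure (Euc d) :=
  (surfaceMeasure d).withDensity fun y => ENNReal.ofReal (ρ y)

/-- the exponent `α = 2/(d-1)` -/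
def alpha (d : ℕ) : ℝ := 2 / ((d : ℝ) - 1)

/-- the constant `C(q) = 2^{1/α} σ_{d-2} ρ(q) / (d-1)` -/
def Cq (d : ℕ) (ρ : Euc d → ℝ) (q : Euc d) : ℝ :=
  (2 : ℝ) ^ (1 / alpha d) * sphereArea (d - 1) * ρ q / ((d : ℝ) - 1)

variable {Ω : Type*} [MeasurableSpace Ω]

lemma vol_target {n : ℕ} {a c : ℝ} (ha : 0 ≤ a) (hc : 0 ≤ c) :
    (volume : Measure (ℝ × Euc n)) {p | 0 < p.1 ∧ p.1 < a ∧ ‖p.2‖ ≤ c * p.1}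
      = ENNReal.ofReal (c ^ n * a ^ (n + 1) / (n + 1)) * volume (ball (0 : Euc n) 1) := by
  have hT : MeasurableSet {p : ℝ × Euc n | 0 < p.1 ∧ p.1 < a ∧ ‖p.2‖ ≤ c * p.1} :=
    (measurableSet_lt measurable_const measurable_fst).inter
      ((measurableSet_lt measurable_fst measurable_const).inter
        (measurableSet_le measurable_snd.norm (measurable_fst.const_mul c)))
  rw [Measure.volume_eq_prod, Measure.prod_apply hT]
  have key : ∀ s : ℝ, (volume : Measure (Euc n))
      (Prod.mk s ⁻¹' {p : ℝ × Euc n | 0 < p.1 ∧ p.1 < a ∧ ‖p.2‖ ≤ c * p.1})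
      = (Ioo (0:ℝ) a).indicator
          (fun s => ENNReal.ofReal ((c * s) ^ n) * volume (ball (0 : Euc n) 1)) s := by
    intro s
    by_cases hs : s ∈ Ioo (0:ℝ) a
    · rw [indicator_of_mem hs]
      have : Prod.mk s ⁻¹' {p : ℝ × Euc n | 0 < p.1 ∧ p.1 < a ∧ ‖p.2‖ ≤ c * p.1}
          = closedBall (0 : Euc n) (c * s) := by
        ext z
        simp [hs.1, hs.2, mem_closedBall, dist_eq_norm]
      rw [this, Measure.addHaar_closedBall _ _ (mul_nonneg hc hs.1.le),
        finrank_euclideanSpace_fin]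
    · rw [indicator_of_notMem hs]
      have : Prod.mk s ⁻¹' {p : ℝ × Euc n | 0 < p.1 ∧ p.1 < a ∧ ‖p.2‖ ≤ c * p.1} = ∅ := by
        ext z
        simp only [mem_preimage, mem_setOf_eq, mem_empty_iff_false, iff_false]
        rintro ⟨h1, h2, -⟩
        exact hs ⟨h1, h2⟩
      simp [this]
  simp_rw [key]
  rw [lintegral_indicator measurableSet_Ioo _]
  rw [lintegral_mul_const _ (by fun_prop : Measurable fun s : ℝ => ENNReal.ofReal ((c*s)^n))]
  congr 1
  have hint : IntegrableOn (fun s : ℝ => (c * s) ^ n) (Ioo 0 a) volume :=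
    (Continuous.integrableOn_Icc (by continuity)).mono_set Ioo_subset_Icc_self
  rw [← MeasureTheory.ofReal_integral_eq_lintegral_ofReal hint ?nn]
  case nn =>
    filter_upwards [ae_restrict_mem measurableSet_Ioo] with s hs
    exact pow_nonneg (mul_nonneg hc hs.1.le) n
  congr 1
  rw [← MeasureTheory.integral_Ioc_eq_integral_Ioo, ← intervalIntegral.integral_of_le ha]
  simp_rw [mul_pow]
  rw [intervalIntegral.integral_const_mul, integral_pow]
  push_cast
  ring

lemma exists_onb {n : ℕ} (q : Euc (n + 1)) (hq : ‖q‖ = 1) :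
    ∃ b : OrthonormalBasis (Fin (n + 1)) ℝ (Euc (n + 1)), b 0 = q := by
  have hcard : Module.finrank ℝ (Euc (n + 1)) = Fintype.card (Fin (n + 1)) := by
    simp [finrank_euclideanSpace_fin]
  have horth : Orthonormal ℝ (({0} : Set (Fin (n+1))).restrict (fun _ => q)) := by
    rw [orthonormal_iff_ite]
    rintro ⟨i, hi⟩ ⟨j, hj⟩
    have : (⟨i, hi⟩ : ({0} : Set (Fin (n+1)))) = ⟨j, hj⟩ := by
      have hi' : i = 0 := hi
      have hj' : j = 0 := hj
      exact Subtype.ext (hi'.trans hj'.symm)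
    simp only [this, if_pos rfl, Set.restrict_apply]
    rw [real_inner_self_eq_norm_sq]; show ‖q‖ ^ 2 = _; rw [hq]; norm_num
  obtain ⟨b, hb⟩ := horth.exists_orthonormalBasis_extension_of_card_eq hcard
  exact ⟨b, hb 0 rfl⟩

lemma vol_W {n : ℕ} {q : Euc (n + 1)} (hq : ‖q‖ = 1) {a c : ℝ} (ha : 0 ≤ a) (hc : 0 ≤ c) :
    (volume : Measure (Euc (n + 1)))
        {y | 0 < ⟪q, y⟫ ∧ ⟪q, y⟫ < a ∧ ‖y‖ ^ 2 ≤ (1 + c ^ 2) * ⟪q, y⟫ ^ 2}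
      = ENNReal.ofReal (c ^ n * a ^ (n + 1) / (n + 1)) * volume (ball (0 : Euc n) 1) := by
  obtain ⟨b, hb0⟩ := exists_onb q hq
  set T : Set (ℝ × Euc n) := {p | 0 < p.1 ∧ p.1 < a ∧ ‖p.2‖ ≤ c * p.1} with hTdef
  have hT : MeasurableSet T :=
    (measurableSet_lt measurable_const measurable_fst).inter
      ((measurableSet_lt measurable_fst measurable_const).inter
        (measurableSet_le measurable_snd.norm (measurable_fst.const_mul c)))
  -- the measure-preserving composite map
  have mp1 : MeasurePreserving (⇑b.repr) (volume : Measure (Euc (n+1))) volume :=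
    b.measurePreserving_repr
  have mp2 := EuclideanSpace.volume_preserving_symm_measurableEquiv_toLp (Fin (n+1))
  have mp3 := volume_preserving_piFinSuccAbove (fun _ : Fin (n+1) => ℝ) 0
  have mp4 : MeasurePreserving
      (Prod.map (id : ℝ → ℝ) (⇑(MeasurableEquiv.toLp 2 (Fin n → ℝ))))
      volume volume := by
    rw [Measure.volume_eq_prod, Measure.volume_eq_prod]
    exact (MeasurePreserving.id _).prod
      (EuclideanSpace.volume_preserving_symm_measurableEquiv_toLp (Fin n)).symm
  have mp := mp4.comp ((mp3.comp mp2).comp mp1)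
  have hpre : {y : Euc (n+1) | 0 < ⟪q, y⟫ ∧ ⟪q, y⟫ < a ∧ ‖y‖ ^ 2 ≤ (1 + c ^ 2) * ⟪q, y⟫ ^ 2}
      = ((Prod.map (id : ℝ → ℝ) (⇑(MeasurableEquiv.toLp 2 (Fin n → ℝ)))) ∘
          ((⇑(MeasurableEquiv.piFinSuccAbove (fun _ : Fin (n+1) => ℝ) 0) ∘
            ⇑(MeasurableEquiv.toLp 2 (Fin (n+1) → ℝ)).symm) ∘ ⇑b.repr)) ⁻¹' T := by
    ext y
    have hv0 : b.repr y 0 = ⟪q, y⟫ := by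
      rw [b.repr_apply_apply, hb0]
    have hnorm : ‖y‖ ^ 2 = ∑ i, (b.repr y i) ^ 2 := by
      rw [← b.repr.norm_map y, EuclideanSpace.norm_eq, Real.sq_sqrt (by positivity)]
      simp [sq_abs]
    have hsum : ∑ i, (b.repr y i) ^ 2
        = (b.repr y 0) ^ 2 + ∑ j : Fin n, (b.repr y j.succ) ^ 2 := by
      rw [Fin.sum_univ_succ]
    have htail : ‖(MeasurableEquiv.toLp 2 (Fin n → ℝ))
          (Fin.tail ((WithLp.equiv 2 (Fin (n+1) → ℝ)) (b.repr y)))‖ ^ 2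
        = ∑ j : Fin n, (b.repr y j.succ) ^ 2 := by
      rw [EuclideanSpace.norm_eq, Real.sq_sqrt (by positivity)]
      refine Finset.sum_congr rfl fun j _ => ?_
      rw [Real.norm_eq_abs, sq_abs]
      rfl
    simp only [mem_preimage, Function.comp_apply, hTdef, mem_setOf_eq, Prod.map_apply, id_eq,
      MeasurableEquiv.piFinSuccAbove_apply]
    simp only [Fin.insertNthEquiv, Equiv.coe_fn_symm_mk, Fin.removeNth_zero,
      MeasurableEquiv.coe_toLp_symm, MeasurableEquiv.coe_toLp, Prod.map_apply, id_eq]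
    have hw0 : ((WithLp.equiv 2 (Fin (n+1) → ℝ)) (b.repr y)) 0 = b.repr y 0 := rfl
    rw [hv0]
    have hzsq : ‖(MeasurableEquiv.toLp 2 (Fin n → ℝ))
          (Fin.tail ((WithLp.equiv 2 (Fin (n+1) → ℝ)) (b.repr y)))‖ ^ 2
        = ‖y‖ ^ 2 - ⟪q, y⟫ ^ 2 := by
      rw [htail]
      have := hnorm.trans hsum
      rw [hv0] at this
      linarith
    have hzn : (0:ℝ) ≤ ‖(MeasurableEquiv.toLp 2 (Fin n → ℝ))
          (Fin.tail ((WithLp.equiv 2 (Fin (n+1) → ℝ)) (b.repr y)))‖ := norm_nonneg _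
    constructor
    · rintro ⟨h1, h2, h3⟩
      refine ⟨h1, h2, ?_⟩
      have h4 : ‖(MeasurableEquiv.toLp 2 (Fin n → ℝ))
          (Fin.tail ((WithLp.equiv 2 (Fin (n+1) → ℝ)) (b.repr y)))‖ ^ 2 ≤ (c * ⟪q, y⟫) ^ 2 := by
        rw [hzsq]; nlinarith
      have h5 := Real.sqrt_le_sqrt h4
      rwa [Real.sqrt_sq hzn, Real.sqrt_sq (mul_nonneg hc h1.le)] at h5
    · rintro ⟨h1, h2, h3⟩
      refine ⟨h1, h2, ?_⟩
      have h4 := pow_le_pow_left₀ hzn h3 2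
      rw [hzsq] at h4
      nlinarith
  rw [hpre, mp.measure_preimage hT.nullMeasurableSet]
  exact vol_target ha hc

lemma cone_char {n : ℕ} {q : Euc (n + 1)} (hq : ‖q‖ = 1) {t : ℝ} (ht1 : t < 1) :
    (Ioo (0:ℝ) 1 • (Subtype.val '' {x : sphere (0 : Euc (n+1)) 1 | 1 - ⟪q, x.1⟫ ≤ t}))
      = {y : Euc (n+1) | 0 < ‖y‖ ∧ ‖y‖ < 1 ∧ (1 - t) * ‖y‖ ≤ ⟪q, y⟫} := by
  ext y
  constructor
  · rintro ⟨r, hr, y', ⟨x, hx, rfl⟩, rfl⟩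
    have hx1 : ‖(x : Euc (n+1))‖ = 1 := mem_sphere_zero_iff_norm.mp x.2
    have hxq : 1 - t ≤ ⟪q, (x : Euc (n+1))⟫ := by
      have := hx; simp only [mem_setOf_eq] at this; linarith
    have hnr : ‖r • (x : Euc (n+1))‖ = r := by
      rw [norm_smul, hx1, Real.norm_eq_abs, abs_of_pos hr.1, mul_one]
    refine ⟨by rw [hnr]; exact hr.1, by rw [hnr]; exact hr.2, ?_⟩
    rw [hnr, real_inner_smul_right, mul_comm r _]
    exact mul_le_mul_of_nonneg_right hxq hr.1.le
  · rintro ⟨h0, h1, h2⟩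
    have hy0 : y ≠ 0 := by intro h; rw [h] at h0; simp at h0
    refine ⟨‖y‖, ⟨h0, h1⟩, ‖y‖⁻¹ • y, ⟨⟨‖y‖⁻¹ • y, ?_⟩, ?_, rfl⟩, ?_⟩
    · exact mem_sphere_zero_iff_norm.mpr (norm_smul_inv_norm hy0)
    · simp only [mem_setOf_eq, real_inner_smul_right]
      have h3 : ‖y‖⁻¹ * ((1 - t) * ‖y‖) ≤ ‖y‖⁻¹ * ⟪q, y⟫ :=
        mul_le_mul_of_nonneg_left h2 (inv_nonneg.mpr h0.le)
      rw [mul_comm (1-t) ‖y‖, ← mul_assoc, inv_mul_cancel₀ h0.ne', one_mul] at h3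
      linarith
    · show ‖y‖ • (‖y‖⁻¹ • y) = y
      rw [smul_smul, mul_inv_cancel₀ h0.ne', one_smul]

lemma cone_subset_W {n : ℕ} {q : Euc (n + 1)} (hq : ‖q‖ = 1) {t c : ℝ} (ht : 0 < t) (ht1 : t < 1)
    (hc2 : 1 + c ^ 2 = ((1 - t)⁻¹) ^ 2) :
    {y : Euc (n+1) | 0 < ‖y‖ ∧ ‖y‖ < 1 ∧ (1 - t) * ‖y‖ ≤ ⟪q, y⟫}
      ⊆ {y | 0 < ⟪q, y⟫ ∧ ⟪q, y⟫ < 1 ∧ ‖y‖ ^ 2 ≤ (1 + c ^ 2) * ⟪q, y⟫ ^ 2} := by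
  rintro y ⟨h0, h1, h2⟩
  have h1t : (0:ℝ) < 1 - t := by linarith
  have hqy : 0 < ⟪q, y⟫ := lt_of_lt_of_le (mul_pos h1t h0) h2
  have hcs : ⟪q, y⟫ ≤ ‖y‖ := by
    have := real_inner_le_norm q y
    rwa [hq, one_mul] at this
  refine ⟨hqy, lt_of_le_of_lt hcs h1, ?_⟩
  rw [hc2]
  have h3 : (1 - t) ^ 2 * ‖y‖ ^ 2 ≤ ⟪q, y⟫ ^ 2 := by
    have h5 := mul_self_le_mul_self (mul_nonneg h1t.le (norm_nonneg y)) h2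
    nlinarith [h5]
  have h4 : ((1 - t)⁻¹) ^ 2 * ((1 - t) ^ 2 * ‖y‖ ^ 2) ≤ ((1 - t)⁻¹) ^ 2 * ⟪q, y⟫ ^ 2 :=
    mul_le_mul_of_nonneg_left h3 (by positivity)
  calc ‖y‖ ^ 2 = ((1 - t)⁻¹) ^ 2 * ((1 - t) ^ 2 * ‖y‖ ^ 2) := by
        field_simp
    _ ≤ _ := h4

lemma W_subset_cone {n : ℕ} {q : Euc (n + 1)} (hq : ‖q‖ = 1) {t c : ℝ} (ht : 0 < t) (ht1 : t < 1)
    (hc2 : 1 + c ^ 2 = ((1 - t)⁻¹) ^ 2) :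
    {y : Euc (n+1) | 0 < ⟪q, y⟫ ∧ ⟪q, y⟫ < 1 - t ∧ ‖y‖ ^ 2 ≤ (1 + c ^ 2) * ⟪q, y⟫ ^ 2}
      ⊆ {y | 0 < ‖y‖ ∧ ‖y‖ < 1 ∧ (1 - t) * ‖y‖ ≤ ⟪q, y⟫} := by
  rintro y ⟨h0, h1, h2⟩
  have h1t : (0:ℝ) < 1 - t := by linarith
  have hcs : ⟪q, y⟫ ≤ ‖y‖ := by
    have := real_inner_le_norm q y
    rwa [hq, one_mul] at this
  have hy0 : 0 < ‖y‖ := lt_of_lt_of_le h0 hcs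
  rw [hc2] at h2
  have h3 : (1 - t) ^ 2 * ‖y‖ ^ 2 ≤ ⟪q, y⟫ ^ 2 := by
    have h4 : (1 - t) ^ 2 * ‖y‖ ^ 2 ≤ (1 - t) ^ 2 * (((1 - t)⁻¹) ^ 2 * ⟪q, y⟫ ^ 2) :=
      mul_le_mul_of_nonneg_left h2 (by positivity)
    calc (1 - t) ^ 2 * ‖y‖ ^ 2 ≤ _ := h4
      _ = ⟪q, y⟫ ^ 2 := by field_simp
  refine ⟨hy0, ?_, ?_⟩
  · by_contra hcon
    push_neg at hcon
    have h6 : (1:ℝ) ≤ ‖y‖ ^ 2 := by nlinarith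
    have h5 : (1 - t) ^ 2 * 1 ≤ (1 - t) ^ 2 * ‖y‖ ^ 2 :=
      mul_le_mul_of_nonneg_left h6 (by positivity)
    nlinarith [h3]
  · by_contra hcon
    push_neg at hcon
    have h5 := mul_self_lt_mul_self h0.le hcon
    nlinarith [h3]

def ct (t : ℝ) : ℝ := Real.sqrt (((1 - t)⁻¹) ^ 2 - 1)

lemma ct_nonneg (t : ℝ) : 0 ≤ ct t := Real.sqrt_nonneg _

lemma ct_sq {t : ℝ} (ht : 0 < t) (ht1 : t < 1) : 1 + ct t ^ 2 = ((1 - t)⁻¹) ^ 2 := by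
  have h1t : (0:ℝ) < 1 - t := by linarith
  have hinv : 1 ≤ (1 - t)⁻¹ := by
    rw [← one_div]
    exact (le_div_iff₀ h1t).mpr (by linarith)
  have hsq : 0 ≤ ((1 - t)⁻¹) ^ 2 - 1 := by nlinarith
  rw [ct, Real.sq_sqrt hsq]; ring

lemma cap_measurable {n : ℕ} (q : Euc (n+1)) (t : ℝ) :
    MeasurableSet {y : Euc (n+1) | 1 - ⟪q, y⟫ ≤ t} := by
  have hcont : Continuous fun y : Euc (n+1) => 1 - ⟪q, y⟫ :=
    continuous_const.sub (continuous_const.inner continuous_id)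
  exact measurableSet_le hcont.measurable measurable_const

lemma cap_measure_bounds {n : ℕ} {q : Euc (n+1)} (hq : ‖q‖ = 1) {t : ℝ}
    (ht : 0 < t) (ht1 : t < 1) :
    ENNReal.ofReal ((1 - t) ^ (n + 1) * ct t ^ n) * volume (ball (0 : Euc n) 1)
        ≤ (volume : Measure (Euc (n+1))).toSphere {x : sphere (0 : Euc (n+1)) 1 | 1 - ⟪q, x.1⟫ ≤ t}
      ∧ (volume : Measure (Euc (n+1))).toSphere {x : sphere (0 : Euc (n+1)) 1 | 1 - ⟪q, x.1⟫ ≤ t}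
        ≤ ENNReal.ofReal (ct t ^ n) * volume (ball (0 : Euc n) 1) := by
  have h1t : (0:ℝ) < 1 - t := by linarith
  have hcapM : MeasurableSet {x : sphere (0 : Euc (n+1)) 1 | 1 - ⟪q, x.1⟫ ≤ t} :=
    measurable_subtype_coe (cap_measurable q t)
  have hdim : Module.finrank ℝ (Euc (n+1)) = n + 1 := finrank_euclideanSpace_fin
  have happ := (volume : Measure (Euc (n+1))).toSphere_apply' hcapM
  rw [hdim] at happ
  have himg : Subtype.val '' {x : sphere (0 : Euc (n+1)) 1 | 1 - ⟪q, x.1⟫ ≤ t}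
      = Subtype.val '' {x : sphere (0 : Euc (n+1)) 1 | 1 - ⟪q, x.1⟫ ≤ t} := rfl
  rw [cone_char hq ht1] at happ
  have hnn1 : (0:ℝ) ≤ n + 1 := by positivity
  have hcastne : ((n:ℝ) + 1) ≠ 0 := by positivity
  constructor
  · -- lower bound
    have hmono := measure_mono (μ := (volume : Measure (Euc (n+1)))) (W_subset_cone hq ht ht1 (ct_sq ht ht1))
    have hW := vol_W (q := q) hq (a := 1 - t) (c := ct t) h1t.le (ct_nonneg t)
    rw [happ]
    calc ENNReal.ofReal ((1 - t) ^ (n + 1) * ct t ^ n) * volume (ball (0 : Euc n) 1)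
        = (↑(n+1) : ℝ≥0∞) * (ENNReal.ofReal (ct t ^ n * (1 - t) ^ (n + 1) / (n + 1))
            * volume (ball (0 : Euc n) 1)) := by
          rw [← mul_assoc, ← ENNReal.ofReal_natCast (n+1), ← ENNReal.ofReal_mul (by positivity)]
          congr 2
          push_cast
          field_simp
      _ = (↑(n+1) : ℝ≥0∞) * volume {y : Euc (n+1) |
            0 < ⟪q, y⟫ ∧ ⟪q, y⟫ < 1 - t ∧ ‖y‖ ^ 2 ≤ (1 + ct t ^ 2) * ⟪q, y⟫ ^ 2} := by rw [hW]
      _ ≤ _ := mul_le_mul_right hmono _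
  · -- upper bound
    have hmono := measure_mono (μ := (volume : Measure (Euc (n+1)))) (cone_subset_W hq ht ht1 (ct_sq ht ht1))
    have hW := vol_W (q := q) hq (a := 1) (c := ct t) zero_le_one (ct_nonneg t)
    rw [happ]
    calc (↑(n+1) : ℝ≥0∞) * volume {y : Euc (n+1) |
            0 < ‖y‖ ∧ ‖y‖ < 1 ∧ (1 - t) * ‖y‖ ≤ ⟪q, y⟫}
        ≤ (↑(n+1) : ℝ≥0∞) * volume {y : Euc (n+1) |
            0 < ⟪q, y⟫ ∧ ⟪q, y⟫ < 1 ∧ ‖y‖ ^ 2 ≤ (1 + ct t ^ 2) * ⟪q, y⟫ ^ 2} :=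
          mul_le_mul_right hmono _
      _ = ENNReal.ofReal (ct t ^ n) * volume (ball (0 : Euc n) 1) := by
          rw [hW, ← mul_assoc, ← ENNReal.ofReal_natCast (n+1), ← ENNReal.ofReal_mul (by positivity)]
          congr 2
          push_cast
          field_simp
          ring

def ballVol (n : ℕ) : ℝ := (volume (ball (0 : Euc n) 1)).toReal

lemma ballVol_pos {n : ℕ} : 0 < ballVol n :=
  ENNReal.toReal_pos (measure_ball_pos _ _ one_pos).ne' measure_ball_lt_top.ne

lemma tokenLaw_cap_eq {n : ℕ} (q : Euc (n+1)) (ρ : Euc (n+1) → ℝ) (hρc : Continuous ρ) (t : ℝ) :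
    tokenLaw (n+1) ρ {y | 1 - ⟪q, y⟫ ≤ t}
      = ∫⁻ x in {x : sphere (0 : Euc (n+1)) 1 | 1 - ⟪q, x.1⟫ ≤ t},
          ENNReal.ofReal (ρ x.1) ∂(volume : Measure (Euc (n+1))).toSphere := by
  rw [tokenLaw, withDensity_apply _ (cap_measurable q t), surfaceMeasure,
    setLIntegral_map (cap_measurable q t)
      (hρc.measurable.ennreal_ofReal) measurable_subtype_coe]
  rfl

lemma F_raw_bounds {n : ℕ} {q : Euc (n+1)} (hq : ‖q‖ = 1) {ρ : Euc (n+1) → ℝ}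
    (hρc : Continuous ρ) (hρnn : ∀ y, 0 ≤ ρ y) (hρq : 0 < ρ q)
    (hfin : IsFiniteMeasure (tokenLaw (n+1) ρ))
    {ε : ℝ} (hε : 0 < ε) (hε1 : ε < 1) :
    ∀ᶠ t in 𝓝[>] (0:ℝ),
      (1 - ε) * ρ q * ((1 - t) ^ (n + 1) * ct t ^ n) * ballVol n
          ≤ (tokenLaw (n+1) ρ {y | 1 - ⟪q, y⟫ ≤ t}).toReal
      ∧ (tokenLaw (n+1) ρ {y | 1 - ⟪q, y⟫ ≤ t}).toReal
          ≤ (1 + ε) * ρ q * ct t ^ n * ballVol n := by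
  -- continuity of ρ at q
  obtain ⟨δ, hδ0, hδ⟩ := Metric.continuousAt_iff.mp hρc.continuousAt (ε * ρ q) (by positivity)
  have hmem : Ioo (0:ℝ) (min 1 (δ^2/2)) ∈ 𝓝[>] (0:ℝ) :=
    Ioo_mem_nhdsGT_of_mem ⟨le_refl _, lt_min one_pos (by positivity)⟩
  filter_upwards [hmem] with t htmem
  obtain ⟨ht, htm⟩ := htmem
  have ht1 : t < 1 := lt_of_lt_of_le htm (min_le_left _ _)
  have htδ : t < δ^2/2 := lt_of_lt_of_le htm (min_le_right _ _)
  -- density bounds on the cap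
  have hcapρ : ∀ x : sphere (0 : Euc (n+1)) 1, 1 - ⟪q, (x : Euc (n+1))⟫ ≤ t →
      (1 - ε) * ρ q ≤ ρ x ∧ ρ (x : Euc (n+1)) ≤ (1 + ε) * ρ q := by
    intro x hx
    have hx1 : ‖(x : Euc (n+1))‖ = 1 := mem_sphere_zero_iff_norm.mp x.2
    have hdist : dist (x : Euc (n+1)) q < δ := by
      rw [dist_eq_norm]
      have hsq : ‖(x : Euc (n+1)) - q‖ ^ 2 = 2 - 2 * ⟪q, (x : Euc (n+1))⟫ := by
        rw [norm_sub_sq_real, hx1, hq, real_inner_comm]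
        ring
      have h2t : ‖(x : Euc (n+1)) - q‖ ^ 2 ≤ 2 * t := by rw [hsq]; linarith
      nlinarith [norm_nonneg ((x : Euc (n+1)) - q), hδ0]
    have := hδ hdist
    rw [Real.dist_eq, abs_lt] at this
    constructor <;> nlinarith
  -- measure computation
  rw [tokenLaw_cap_eq q ρ hρc t]
  have hσ := cap_measure_bounds hq ht ht1
  set cap := {x : sphere (0 : Euc (n+1)) 1 | 1 - ⟪q, x.1⟫ ≤ t} with hcap
  have hup : ∫⁻ x in cap, ENNReal.ofReal (ρ x.1) ∂(volume : Measure (Euc (n+1))).toSphere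
      ≤ ENNReal.ofReal ((1 + ε) * ρ q) * ((volume : Measure (Euc (n+1))).toSphere cap) := by
    rw [← setLIntegral_const cap (ENNReal.ofReal ((1 + ε) * ρ q))]
    exact setLIntegral_mono measurable_const
      (fun x hx => ENNReal.ofReal_le_ofReal (hcapρ x hx).2)
  have hlo : ENNReal.ofReal ((1 - ε) * ρ q) * ((volume : Measure (Euc (n+1))).toSphere cap)
      ≤ ∫⁻ x in cap, ENNReal.ofReal (ρ x.1) ∂(volume : Measure (Euc (n+1))).toSphere := by
    rw [← setLIntegral_const cap (ENNReal.ofReal ((1 - ε) * ρ q))]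
    exact setLIntegral_mono (hρc.measurable.ennreal_ofReal.comp measurable_subtype_coe)
      (fun x hx => ENNReal.ofReal_le_ofReal (hcapρ x hx).1)
  have hfin' : ∫⁻ x in cap, ENNReal.ofReal (ρ x.1) ∂(volume : Measure (Euc (n+1))).toSphere ≠ ⊤ := by
    rw [← tokenLaw_cap_eq q ρ hρc t]
    exact (measure_lt_top _ _).ne
  constructor
  · -- lower bound
    have hchain : ENNReal.ofReal ((1 - ε) * ρ q * ((1 - t) ^ (n + 1) * ct t ^ n))
          * volume (ball (0 : Euc n) 1)
        ≤ ∫⁻ x in cap, ENNReal.ofReal (ρ x.1) ∂(volume : Measure (Euc (n+1))).toSphere := by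
      refine le_trans ?_ hlo
      rw [ENNReal.ofReal_mul (mul_nonneg (by linarith : (0:ℝ) ≤ 1 - ε) hρq.le), mul_assoc]
      exact mul_le_mul_right hσ.1 _
    have := ENNReal.toReal_mono hfin' hchain
    rw [ENNReal.toReal_mul, ENNReal.toReal_ofReal (mul_nonneg
      (mul_nonneg (by linarith : (0:ℝ) ≤ 1 - ε) hρq.le)
      (mul_nonneg (pow_nonneg (by linarith : (0:ℝ) ≤ 1 - t) _)
        (pow_nonneg (ct_nonneg t) _)))] at this
    calc (1 - ε) * ρ q * ((1 - t) ^ (n + 1) * ct t ^ n) * ballVol n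
        = (1 - ε) * ρ q * ((1 - t) ^ (n + 1) * ct t ^ n) * ballVol n := rfl
      _ ≤ _ := this
  · -- upper bound
    have hchain : ∫⁻ x in cap, ENNReal.ofReal (ρ x.1) ∂(volume : Measure (Euc (n+1))).toSphere
        ≤ ENNReal.ofReal ((1 + ε) * ρ q * ct t ^ n) * volume (ball (0 : Euc n) 1) := by
      refine le_trans hup ?_
      rw [ENNReal.ofReal_mul (mul_nonneg (by linarith) hρq.le), mul_assoc]
      exact mul_le_mul_right hσ.2 _
    have hRfin : ENNReal.ofReal ((1 + ε) * ρ q * ct t ^ n) * volume (ball (0 : Euc n) 1) ≠ ⊤ :=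
      ENNReal.mul_ne_top ENNReal.ofReal_ne_top measure_ball_lt_top.ne
    have := ENNReal.toReal_mono hRfin hchain
    rw [ENNReal.toReal_mul, ENNReal.toReal_ofReal (mul_nonneg
      (mul_nonneg (by linarith : (0:ℝ) ≤ 1 + ε) hρq.le) (pow_nonneg (ct_nonneg t) _))] at this
    exact this

lemma ct_pow_eq {n : ℕ} {t : ℝ} (ht : 0 < t) (ht1 : t < 1) :
    ct t ^ n = t ^ ((n:ℝ)/2) * (2 - t) ^ ((n:ℝ)/2) / (1 - t) ^ n := by
  have h1t : (0:ℝ) < 1 - t := by linarith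
  have h2t : (0:ℝ) ≤ 2 - t := by linarith
  have harg : ((1 - t)⁻¹) ^ 2 - 1 = t * (2 - t) / (1 - t) ^ 2 := by
    field_simp
    ring
  have hct : ct t = Real.sqrt (t * (2 - t)) / (1 - t) := by
    rw [ct, harg, Real.sqrt_div (by positivity), Real.sqrt_sq h1t.le]
  rw [hct, div_pow]
  congr 1
  rw [Real.sqrt_eq_rpow, ← Real.rpow_natCast (_ ^ (1/2 : ℝ)) n,
    ← Real.rpow_mul (by positivity), ← Real.mul_rpow ht.le h2t]
  congr 1
  ring

lemma cdf_bounds {n : ℕ} {q : Euc (n+1)} (hq : ‖q‖ = 1) {ρ : Euc (n+1) → ℝ}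
    (hρc : Continuous ρ) (hρnn : ∀ y, 0 ≤ ρ y) (hρq : 0 < ρ q)
    (hfin : IsFiniteMeasure (tokenLaw (n+1) ρ))
    {ε : ℝ} (hε : 0 < ε) (hε1 : ε < 1) :
    ∀ᶠ t in 𝓝[>] (0:ℝ),
      (1 - ε) * ((2:ℝ) ^ ((n:ℝ)/2) * ρ q * ballVol n) * t ^ ((n:ℝ)/2)
          ≤ (tokenLaw (n+1) ρ {y | 1 - ⟪q, y⟫ ≤ t}).toReal
      ∧ (tokenLaw (n+1) ρ {y | 1 - ⟪q, y⟫ ≤ t}).toReal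
          ≤ (1 + ε) * ((2:ℝ) ^ ((n:ℝ)/2) * ρ q * ballVol n) * t ^ ((n:ℝ)/2) := by
  set κ : ℝ := (n:ℝ)/2 with hκ
  set CC : ℝ := (2:ℝ) ^ κ * ρ q * ballVol n with hCC
  have hCCpos : 0 < CC := by
    have := ballVol_pos (n := n)
    have h2 : (0:ℝ) < (2:ℝ) ^ κ := Real.rpow_pos_of_pos two_pos κ
    positivity
  set ε' : ℝ := ε/3 with hε'
  have hε'0 : 0 < ε' := by positivity
  have hε'1 : ε' < 1 := by linarith
  -- the ratio functions
  have hu_cont : ContinuousAt (fun t : ℝ => (2 - t) ^ κ / ((2:ℝ) ^ κ * (1 - t) ^ n)) 0 := by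
    apply ContinuousAt.div
    · exact ContinuousAt.rpow_const (by fun_prop : ContinuousAt (fun t : ℝ => 2 - t) 0)
        (Or.inl (by norm_num))
    · fun_prop
    · simp
      positivity
  have hu0 : ((2:ℝ) - 0) ^ κ / ((2:ℝ) ^ κ * ((1:ℝ) - 0) ^ n) = 1 := by
    simp
    exact (by positivity : (2:ℝ) ^ κ ≠ 0)
  have hv_cont : ContinuousAt
      (fun t : ℝ => (2 - t) ^ κ / ((2:ℝ) ^ κ * (1 - t) ^ n) * (1 - t) ^ (n+1)) 0 :=
    hu_cont.mul (by fun_prop)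
  have hv0 : ((2:ℝ) - 0) ^ κ / ((2:ℝ) ^ κ * ((1:ℝ) - 0) ^ n) * ((1:ℝ) - 0) ^ (n+1) = 1 := by
    simp
    exact (by positivity : (2:ℝ) ^ κ ≠ 0)
  have hu_ev : ∀ᶠ t in 𝓝[>] (0:ℝ),
      (2 - t) ^ κ / ((2:ℝ) ^ κ * (1 - t) ^ n) < 1 + ε' := by
    have := (hu_cont.tendsto.mono_left (nhdsWithin_le_nhds (s := Ioi (0:ℝ))))
    rw [hu0] at this
    exact this.eventually_lt_const (by linarith)
  have hv_ev : ∀ᶠ t in 𝓝[>] (0:ℝ),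
      1 - ε' < (2 - t) ^ κ / ((2:ℝ) ^ κ * (1 - t) ^ n) * (1 - t) ^ (n+1) := by
    have := (hv_cont.tendsto.mono_left (nhdsWithin_le_nhds (s := Ioi (0:ℝ))))
    rw [hv0] at this
    exact this.eventually_const_lt (by linarith)
  have hIoo : Ioo (0:ℝ) 1 ∈ 𝓝[>] (0:ℝ) := Ioo_mem_nhdsGT_of_mem ⟨le_refl _, one_pos⟩
  filter_upwards [F_raw_bounds hq hρc hρnn hρq hfin hε'0 hε'1, hu_ev, hv_ev, hIoo]
    with t hraw hu hv htIoo
  obtain ⟨ht0, ht1⟩ := htIoo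
  have h1t : (0:ℝ) < 1 - t := by linarith
  have hctn : ct t ^ n = t ^ κ * (2 - t) ^ κ / (1 - t) ^ n := ct_pow_eq ht0 ht1
  have htκ : (0:ℝ) < t ^ κ := Real.rpow_pos_of_pos ht0 κ
  set u : ℝ := (2 - t) ^ κ / ((2:ℝ) ^ κ * (1 - t) ^ n) with hudef
  have hu_pos : 0 < u := by
    apply div_pos
    · exact Real.rpow_pos_of_pos (by linarith) κ
    · positivity
  have hkey : ct t ^ n = t ^ κ * (2:ℝ) ^ κ * u := by
    rw [hctn, hudef]
    field_simp
  constructor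
  · -- lower
    have hlow := hraw.1
    have heq : (1 - ε') * ρ q * ((1 - t) ^ (n + 1) * ct t ^ n) * ballVol n
        = (1 - ε') * (u * (1 - t) ^ (n+1)) * (CC * t ^ κ) := by
      rw [hkey, hCC]
      ring
    rw [heq] at hlow
    refine le_trans ?_ hlow
    have hCt : 0 < CC * t ^ κ := mul_pos hCCpos htκ
    have hv' : 1 - ε' < u * (1 - t) ^ (n+1) := hv
    have h6 : (1 - ε) ≤ (1 - ε') * (u * (1 - t) ^ (n+1)) := by
      have hpos : (0:ℝ) < 1 - ε' := by rw [hε']; linarith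
      nlinarith [mul_lt_mul_of_pos_left hv' hpos]
    calc (1 - ε) * CC * t ^ κ = ((1 - ε)) * (CC * t ^ κ) := by ring
      _ ≤ (1 - ε') * (u * (1 - t) ^ (n+1)) * (CC * t ^ κ) :=
          mul_le_mul_of_nonneg_right h6 hCt.le
  · -- upper
    have hup := hraw.2
    have heq : (1 + ε') * ρ q * ct t ^ n * ballVol n
        = (1 + ε') * u * (CC * t ^ κ) := by
      rw [hkey, hCC]
      ring
    rw [heq] at hup
    refine le_trans hup ?_
    have hCt : 0 < CC * t ^ κ := mul_pos hCCpos htκ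
    have h7 : (1 + ε') * u ≤ 1 + ε := by
      have hpos : (0:ℝ) < 1 + ε' := by rw [hε']; linarith
      nlinarith [mul_lt_mul_of_pos_left hu hpos]
    calc (1 + ε') * u * (CC * t ^ κ) ≤ (1 + ε) * (CC * t ^ κ) :=
          mul_le_mul_of_nonneg_right h7 hCt.le
      _ = (1 + ε) * CC * t ^ κ := by ring

/-- **Quantile asymptotics for the distance-to-query.** With
`F⁻¹(u) = inf {t ≥ 0 : F(t) ≥ u}`, one has `F⁻¹(u) / (u/C(q))^α → 1` as `u → 0⁺`. -/
theorem quantile_asymptotics_dtq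
    {d : ℕ} (hd : 2 ≤ d) {q : Euc d} (hq : ‖q‖ = 1)
    {ρ : Euc d → ℝ} (hρC2 : ContDiff ℝ 2 ρ) (hρnn : ∀ y, 0 ≤ ρ y) (hρq : 0 < ρ q)
    (P : Measure Ω) [IsProbabilityMeasure P]
    {x₁ : Ω → Euc d} (hmeas : Measurable x₁) (hsph : ∀ ω, ‖x₁ ω‖ = 1)
    (hlaw : Measure.map x₁ P = tokenLaw d ρ) :
    Tendsto
      (fun u : ℝ =>
        sInf {t : ℝ | 0 ≤ t ∧ u ≤ (P {ω | 1 - ⟪q, x₁ ω⟫ ≤ t}).toReal} /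
          (u / Cq d ρ q) ^ alpha d)
      (𝓝[>] 0) (𝓝 1) := by
  obtain ⟨n, rfl⟩ : ∃ n, d = n + 1 := ⟨d - 1, (Nat.succ_pred_eq_of_pos (by omega)).symm⟩
  have hn : 1 ≤ n := by omega
  have hnR : (1:ℝ) ≤ (n:ℝ) := by exact_mod_cast hn
  have hρc : Continuous ρ := hρC2.continuous
  haveI hfin : IsProbabilityMeasure (tokenLaw (n+1) ρ) :=
    hlaw ▸ Measure.isProbabilityMeasure_map hmeas.aemeasurable
  -- identify P-quantities with tokenLaw quantities
  have hPF : ∀ t : ℝ, P {ω | 1 - ⟪q, x₁ ω⟫ ≤ t}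
      = tokenLaw (n+1) ρ {y : Euc (n+1) | 1 - ⟪q, y⟫ ≤ t} := by
    intro t
    rw [← hlaw, Measure.map_apply hmeas (cap_measurable q t)]
    rfl
  set F : ℝ → ℝ := fun t => (P {ω | 1 - ⟪q, x₁ ω⟫ ≤ t}).toReal with hF
  have hFmono : Monotone F := by
    intro a b hab
    exact ENNReal.toReal_mono (measure_ne_top P _)
      (measure_mono (fun ω h => le_trans h hab))
  have hF2 : F 2 = 1 := by
    have : {ω | 1 - ⟪q, x₁ ω⟫ ≤ 2} = Set.univ := by
      ext ω
      simp only [mem_setOf_eq, mem_univ, iff_true]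
      have h1 := abs_real_inner_le_norm q (x₁ ω)
      rw [hq, hsph ω, one_mul] at h1
      have := abs_le.mp h1
      linarith [this.1]
    simp only [hF, this, measure_univ, ENNReal.toReal_one]
  -- constants
  set κ : ℝ := (n:ℝ)/2 with hκdef
  have hκpos : 0 < κ := by rw [hκdef]; linarith
  set α : ℝ := alpha (n+1) with hαdef
  have hα : α = 2 / (n:ℝ) := by
    rw [hαdef, alpha]
    push_cast
    ring_nf
  have hαpos : 0 < α := by rw [hα]; positivity
  have hακ : α * κ = 1 := by
    rw [hα, hκdef]
    field_simp
  set C : ℝ := Cq (n+1) ρ q with hCdef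
  have hsphArea : sphereArea n = n * ballVol n := by
    rw [sphereArea, Measure.toSphere_apply_univ, finrank_euclideanSpace_fin,
      ENNReal.toReal_mul, ENNReal.toReal_natCast]
    rfl
  have hCeq : C = (2:ℝ) ^ κ * ρ q * ballVol n := by
    have h3 : 1 / alpha (n+1) = κ := by
      rw [← hαdef, hα, hκdef]
      field_simp
    rw [hCdef, Cq, Nat.add_sub_cancel, hsphArea, h3]
    have h2 : ((n+1 : ℕ) : ℝ) - 1 = (n:ℝ) := by push_cast; ring
    rw [h2]
    have hn0 : (n:ℝ) ≠ 0 := by linarith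
    field_simp
  have hCpos : 0 < C := by
    rw [hCeq]
    have h1 := ballVol_pos (n := n)
    have h2 : (0:ℝ) < (2:ℝ) ^ κ := Real.rpow_pos_of_pos two_pos κ
    positivity
  -- restated CDF bounds
  have hcdfF : ∀ {ε : ℝ}, 0 < ε → ε < 1 → ∀ᶠ t in 𝓝[>] (0:ℝ),
      (1 - ε) * C * t ^ κ ≤ F t ∧ F t ≤ (1 + ε) * C * t ^ κ := by
    intro ε hε hε1
    filter_upwards [cdf_bounds hq hρc hρnn hρq (by infer_instance) hε hε1] with t ht
    have hFt : F t = (tokenLaw (n+1) ρ {y : Euc (n+1) | 1 - ⟪q, y⟫ ≤ t}).toReal := by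
      rw [hF]
      simp only
      rw [hPF t]
    rw [hFt, hCeq]
    exact ht
  rw [Metric.tendsto_nhds]
  intro ε₀ hε₀
  -- choose ε
  have hcont1 : Tendsto (fun e : ℝ => (((1:ℝ) - e) ^ α)⁻¹) (𝓝 0) (𝓝 1) := by
    have hc : ContinuousAt (fun e : ℝ => (((1:ℝ) - e) ^ α)⁻¹) 0 := by
      apply ContinuousAt.inv₀
      · exact ContinuousAt.rpow_const (by fun_prop) (Or.inl (by norm_num))
      · simp [Real.one_rpow]
    have := hc.tendsto
    simpa [Real.one_rpow] using this
  have hcont2 : Tendsto (fun e : ℝ => (((1:ℝ) + e) ^ α)⁻¹) (𝓝 0) (𝓝 1) := by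
    have hc : ContinuousAt (fun e : ℝ => (((1:ℝ) + e) ^ α)⁻¹) 0 := by
      apply ContinuousAt.inv₀
      · exact ContinuousAt.rpow_const (by fun_prop) (Or.inl (by norm_num))
      · simp [Real.one_rpow]
    have := hc.tendsto
    simpa [Real.one_rpow] using this
  have hev : ∀ᶠ e in 𝓝[>] (0:ℝ),
      ((((1:ℝ) - e) ^ α)⁻¹ < 1 + ε₀ ∧ 1 - ε₀ < (((1:ℝ) + e) ^ α)⁻¹) ∧ e ∈ Ioo (0:ℝ) 1 := by
    refine Filter.Eventually.and (Filter.Eventually.and ?_ ?_) ?_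
    · exact (hcont1.mono_left nhdsWithin_le_nhds).eventually_lt_const (by linarith)
    · exact (hcont2.mono_left nhdsWithin_le_nhds).eventually_const_lt (by linarith)
    · exact Ioo_mem_nhdsGT_of_mem ⟨le_refl _, one_pos⟩
  obtain ⟨ε, ⟨hεa, hεb⟩, hε0, hε1⟩ := hev.exists
  -- δ from the CDF bounds
  have hcdf := hcdfF hε0 hε1
  rw [eventually_nhdsWithin_iff, Metric.eventually_nhds_iff] at hcdf
  obtain ⟨δ, hδ0, hδ⟩ := hcdf
  have hbound : ∀ t : ℝ, 0 < t → t < δ →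
      (1 - ε) * C * t ^ κ ≤ F t ∧ F t ≤ (1 + ε) * C * t ^ κ := by
    intro t ht htδ
    refine hδ ?_ ht
    rw [Real.dist_eq, sub_zero, abs_of_pos ht]
    exact htδ
  have hD1 : (0:ℝ) < (1 - ε) * C := mul_pos (by linarith) hCpos
  have hD2 : (0:ℝ) < (1 + ε) * C := mul_pos (by linarith) hCpos
  -- eventual smallness of t₊
  have htp : Tendsto (fun u : ℝ => (u / ((1 - ε) * C)) ^ α) (𝓝[>] (0:ℝ)) (𝓝 0) := by
    have h1 : Tendsto (fun u : ℝ => u / ((1 - ε) * C)) (𝓝[>] (0:ℝ)) (𝓝 0) := by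
      have : Tendsto (fun u : ℝ => u / ((1 - ε) * C)) (𝓝 (0:ℝ)) (𝓝 (0 / ((1 - ε) * C))) :=
        (continuous_id.div_const _).tendsto 0
      rw [zero_div] at this
      exact this.mono_left nhdsWithin_le_nhds
    have h2 : ContinuousAt (fun x : ℝ => x ^ α) 0 :=
      Real.continuousAt_rpow_const 0 α (Or.inr hαpos.le)
    have h3 := h2.tendsto.comp h1
    rwa [Real.zero_rpow hαpos.ne'] at h3
  filter_upwards [htp.eventually_lt_const hδ0, Ioo_mem_nhdsGT_of_mem
    (show (0:ℝ) ∈ Ico (0:ℝ) 1 from ⟨le_refl _, one_pos⟩), self_mem_nhdsWithin]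
    with u htpδ huIoo humem
  obtain ⟨hu0, hu1⟩ := huIoo
  set tp : ℝ := (u / ((1 - ε) * C)) ^ α with htpdef
  set tm : ℝ := (u / ((1 + ε) * C)) ^ α with htmdef
  have htp0 : 0 < tp := Real.rpow_pos_of_pos (div_pos hu0 hD1) α
  have htm0 : 0 < tm := Real.rpow_pos_of_pos (div_pos hu0 hD2) α
  have htmtp : tm ≤ tp := by
    apply Real.rpow_le_rpow (div_pos hu0 hD2).le _ hαpos.le
    exact div_le_div_of_nonneg_left hu0.le hD1 (by nlinarith)
  -- rpow algebra
  have hrpow : ∀ {D : ℝ}, 0 < D → D * ((u / D) ^ α) ^ κ = u := by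
    intro D hD
    rw [← Real.rpow_mul (div_pos hu0 hD).le, hακ, Real.rpow_one]
    field_simp
  -- the quantile set
  set S : Set ℝ := {t : ℝ | 0 ≤ t ∧ u ≤ F t} with hSdef
  have hSne : (2:ℝ) ∈ S := ⟨by norm_num, by rw [hF2]; exact hu1.le⟩
  have hSbdd : BddBelow S := ⟨0, fun x hx => hx.1⟩
  -- upper bound for sInf S
  have hFtp : u ≤ F tp := by
    have h1 := (hbound tp htp0 htpδ).1
    have h2 : (1 - ε) * C * tp ^ κ = u := hrpow hD1
    linarith
  have hub : sInf S ≤ tp := csInf_le hSbdd ⟨htp0.le, hFtp⟩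
  -- lower bound for sInf S
  have hlb : tm ≤ sInf S := by
    apply le_csInf ⟨2, hSne⟩
    intro t ht
    by_contra hcon
    push_neg at hcon
    set m : ℝ := (t + tm) / 2 with hm
    have hm0 : 0 < m := by
      have := ht.1
      rw [hm]; linarith
    have hmtm : m < tm := by rw [hm]; linarith
    have hmδ : m < δ := by
      calc m < tm := hmtm
        _ ≤ tp := htmtp
        _ < δ := htpδ
    have h1 : F t ≤ F m := hFmono (by rw [hm]; linarith)
    have h2 := (hbound m hm0 hmδ).2
    have h3 : (1 + ε) * C * m ^ κ < (1 + ε) * C * tm ^ κ :=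
      mul_lt_mul_of_pos_left (Real.rpow_lt_rpow hm0.le hmtm hκpos) hD2
    have h4 : (1 + ε) * C * tm ^ κ = u := hrpow hD2
    have h5 := ht.2
    linarith
  -- express tp, tm relative to (u/C)^α
  have hden : (0:ℝ) < (u / C) ^ α := Real.rpow_pos_of_pos (div_pos hu0 hCpos) α
  have htp_eq : tp = (u / C) ^ α * (((1:ℝ) - ε) ^ α)⁻¹ := by
    rw [htpdef]
    have h1 : u / ((1 - ε) * C) = (u / C) * (1 - ε)⁻¹ := by
      rw [mul_comm, ← div_div, div_eq_mul_inv]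
    rw [h1, Real.mul_rpow (div_pos hu0 hCpos).le (inv_nonneg.mpr (by linarith)),
      Real.inv_rpow (by linarith : (0:ℝ) ≤ 1 - ε)]
  have htm_eq : tm = (u / C) ^ α * (((1:ℝ) + ε) ^ α)⁻¹ := by
    rw [htmdef]
    have h1 : u / ((1 + ε) * C) = (u / C) * (1 + ε)⁻¹ := by
      rw [mul_comm, ← div_div, div_eq_mul_inv]
    rw [h1, Real.mul_rpow (div_pos hu0 hCpos).le (inv_nonneg.mpr (by linarith)),
      Real.inv_rpow (by linarith : (0:ℝ) ≤ 1 + ε)]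
  -- final estimates
  have hr_ub : sInf S / (u / C) ^ α ≤ (((1:ℝ) - ε) ^ α)⁻¹ := by
    rw [div_le_iff₀ hden]
    calc sInf S ≤ tp := hub
      _ = (((1:ℝ) - ε) ^ α)⁻¹ * (u / C) ^ α := by rw [htp_eq]; ring
  have hr_lb : (((1:ℝ) + ε) ^ α)⁻¹ ≤ sInf S / (u / C) ^ α := by
    rw [le_div_iff₀ hden]
    calc (((1:ℝ) + ε) ^ α)⁻¹ * (u / C) ^ α = tm := by rw [htm_eq]; ring
      _ ≤ sInf S := hlb
  rw [Real.dist_eq, abs_lt]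
  constructor
  · linarith
  · linarith

end AttnScaling
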